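/- arXiv:2511.12542 — 4 statements merged into one kernel-verified Lean document; each statement's English description precedes it below -/
import Mathlib

section
/- Let H be a complex Hilbert space and x_1,...,x_n, y_1,...,y_n ∈ H. Then ∑_{i=1}^n x_i ⊗ y_i = 0 if and only if there exists an n×n complex matrix A with all entries of modulus at most 1 such that (x_1,...,x_n)(I−A) = 0 and (y_1,...,y_n)A* = 0 (as rows of vectors). -/
noncomputable section

open scoped ComplexConjugate InnerProductSpace

/-- The rank-one operator `x ⊗ y : h ↦ ⟨h, y⟩ x` (inner product linear in `h`). -/
noncomputable def rankOne {H : Type*} [NormedAddCommGroup H] [InnerProductSpace ℂ H]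
    (x y : H) : H →L[ℂ] H :=
  (innerSL ℂ y).smulRight x

/-- `∑ xᵢ ⊗ yᵢ = 0` iff there is a matrix `A` with entries of modulus at most `1`
such that `(x_1,...,x_n)(I−A) = 0` and `(y_1,...,y_n)A* = 0`. -/
theorem stmt1 {H : Type*} [NormedAddCommGroup H] [InnerProductSpace ℂ H]
    (n : ℕ) (x y : Fin n → H) :
    (∑ i : Fin n, rankOne (x i) (y i)) = 0 ↔
      ∃ A : Matrix (Fin n) (Fin n) ℂ,
        (∀ i j, ‖A i j‖ ≤ 1) ∧
        (∀ j : Fin n, ∑ i : Fin n, ((1 : Matrix (Fin n) (Fin n) ℂ) - A) i j • x i = 0) ∧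
        (∀ i : Fin n, ∑ j : Fin n, conj (A i j) • y j = 0) := by
  constructor
  · intro h0
    classical
    have hpt : ∀ h : H, ∑ i : Fin n, (⟪y i, h⟫_ℂ) • x i = 0 := by
      intro h
      have := ContinuousLinearMap.ext_iff.mp h0 h
      simpa [rankOne, ContinuousLinearMap.sum_apply] using this
    have hadj : ∀ g : H, ∑ i : Fin n, (⟪x i, g⟫_ℂ) • y i = 0 := by
      intro g
      have key : ∀ h : H, ⟪h, ∑ i : Fin n, (⟪x i, g⟫_ℂ) • y i⟫_ℂ = 0 := by
        intro h
        have h2 := congrArg (fun v => ⟪v, g⟫_ℂ) (hpt h)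
        simp only [sum_inner, inner_smul_left, inner_zero_left, inner_conj_symm] at h2
        rw [inner_sum]
        simp only [inner_smul_right]
        calc ∑ i : Fin n, ⟪x i, g⟫_ℂ * ⟪h, y i⟫_ℂ
            = ∑ i : Fin n, ⟪h, y i⟫_ℂ * ⟪x i, g⟫_ℂ :=
              Finset.sum_congr rfl fun i _ => mul_comm _ _
          _ = 0 := h2
      have := key (∑ i : Fin n, (⟪x i, g⟫_ℂ) • y i)
      rwa [inner_self_eq_zero] at this
    let u : H → EuclideanSpace ℂ (Fin n) := fun g => WithLp.toLp 2 (fun i => ⟪x i, g⟫_ℂ)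
    let U : Submodule ℂ (EuclideanSpace ℂ (Fin n)) := Submodule.span ℂ (Set.range u)
    let Q := U.orthogonalProjectionOnto
    let e : Fin n → EuclideanSpace ℂ (Fin n) := fun i => EuclideanSpace.single i 1
    -- inner product of u g with any vector
    have hug : ∀ (g : H) (c : EuclideanSpace ℂ (Fin n)), ⟪u g, c⟫_ℂ = ⟪g, ∑ i : Fin n, c i • x i⟫_ℂ := by
      intro g c
      rw [inner_sum]
      simp only [inner_smul_right]
      rw [PiLp.inner_apply]
      refine Finset.sum_congr rfl fun i _ => ?_
      simp only [RCLike.inner_apply, u, PiLp.toLp_apply, inner_conj_symm]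
    -- vectors orthogonal to U kill x
    have hker : ∀ c : EuclideanSpace ℂ (Fin n), c ∈ Uᗮ → ∑ i : Fin n, c i • x i = 0 := by
      intro c hc
      have h1 : ⟪u (∑ i : Fin n, c i • x i), c⟫_ℂ = 0 :=
        (Submodule.mem_orthogonal U c).1 hc _ (Submodule.subset_span ⟨_, rfl⟩)
      rw [hug] at h1
      rwa [inner_self_eq_zero] at h1
    -- vectors in U kill y
    have hU : ∀ w : EuclideanSpace ℂ (Fin n), w ∈ U → ∑ j : Fin n, w j • y j = 0 := by
      intro w hw
      induction hw using Submodule.span_induction with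
      | mem v hv =>
        obtain ⟨g, rfl⟩ := hv
        simpa [u] using hadj g
      | zero => simp
      | add v w _ _ hv hw =>
        simp only [PiLp.add_apply, add_smul, Finset.sum_add_distrib, hv, hw, add_zero]
      | smul a v _ hv =>
        simp only [PiLp.smul_apply, smul_eq_mul, ← smul_smul, ← Finset.smul_sum, hv, smul_zero]
    refine ⟨fun i j => ⟪e i, (Q (e j) : EuclideanSpace ℂ (Fin n))⟫_ℂ, ?_, ?_, ?_⟩
    · intro i j
      have h1 : ‖(⟪e i, (Q (e j) : EuclideanSpace ℂ (Fin n))⟫_ℂ)‖ ≤ ‖e i‖ * ‖(Q (e j) : EuclideanSpace ℂ (Fin n))‖ :=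
        norm_inner_le_norm _ _
      have h2 : ‖(Q (e j) : EuclideanSpace ℂ (Fin n))‖ ≤ ‖e j‖ := by
        have h3 := U.orthogonalProjectionOnto.le_opNorm (e j)
        have h4 := Submodule.orthogonalProjectionOnto_norm_le U
        calc ‖(Q (e j) : EuclideanSpace ℂ (Fin n))‖ = ‖Q (e j)‖ := rfl
          _ ≤ ‖U.orthogonalProjectionOnto‖ * ‖e j‖ := h3
          _ ≤ 1 * ‖e j‖ := by
              exact mul_le_mul_of_nonneg_right h4 (norm_nonneg _)
          _ = ‖e j‖ := one_mul _
      have he : ∀ k, ‖e k‖ = 1 := by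
        intro k; simp [e, EuclideanSpace.norm_single]
      calc ‖(⟪e i, (Q (e j) : EuclideanSpace ℂ (Fin n))⟫_ℂ)‖ ≤ ‖e i‖ * ‖(Q (e j) : EuclideanSpace ℂ (Fin n))‖ := h1
        _ ≤ 1 * 1 := by
            rw [he i]
            exact mul_le_mul_of_nonneg_left (le_trans h2 (le_of_eq (he j))) zero_le_one
        _ = 1 := one_mul _
    · intro j
      have hc : e j - (Q (e j) : EuclideanSpace ℂ (Fin n)) ∈ Uᗮ := U.sub_starProjection_mem_orthogonal (e j)
      have hent : ∀ i, ((1 : Matrix (Fin n) (Fin n) ℂ) -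
          Matrix.of fun i j => ⟪e i, (Q (e j) : EuclideanSpace ℂ (Fin n))⟫_ℂ) i j = (e j - (Q (e j) : EuclideanSpace ℂ (Fin n))) i := by
        intro i
        simp only [Matrix.sub_apply, Matrix.one_apply, Matrix.of_apply, PiLp.sub_apply]
        rw [EuclideanSpace.inner_single_left]
        simp only [map_one, one_mul]
        congr 1
        simp [e, EuclideanSpace.single_apply, eq_comm]
      calc ∑ i : Fin n, ((1 : Matrix (Fin n) (Fin n) ℂ) -
              Matrix.of fun i j => ⟪e i, (Q (e j) : EuclideanSpace ℂ (Fin n))⟫_ℂ) i j • x i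
          = ∑ i : Fin n, (e j - (Q (e j) : EuclideanSpace ℂ (Fin n))) i • x i :=
            Finset.sum_congr rfl fun i _ => by rw [hent i]
        _ = 0 := hker _ hc
    · intro i
      have hent : ∀ j, conj (⟪e i, (Q (e j) : EuclideanSpace ℂ (Fin n))⟫_ℂ) = (Q (e i) : EuclideanSpace ℂ (Fin n)) j := by
        intro j
        rw [inner_conj_symm]
        rw [show ⟪(Q (e j) : EuclideanSpace ℂ (Fin n)), e i⟫_ℂ = ⟪e j, (Q (e i) : EuclideanSpace ℂ (Fin n))⟫_ℂ from Submodule.inner_starProjection_left_eq_right U _ _]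
        rw [EuclideanSpace.inner_single_left]
        simp
      calc ∑ j : Fin n, conj (⟪e i, (Q (e j) : EuclideanSpace ℂ (Fin n))⟫_ℂ) • y j
          = ∑ j : Fin n, (Q (e i) : EuclideanSpace ℂ (Fin n)) j • y j :=
            Finset.sum_congr rfl fun j _ => by rw [hent j]
        _ = 0 := hU _ (Q (e i)).2
  · rintro ⟨A, -, hx, hy⟩
    ext h
    simp only [ContinuousLinearMap.sum_apply, ContinuousLinearMap.zero_apply, rankOne,
      ContinuousLinearMap.smulRight_apply, innerSL_apply_apply]
    have hx' : ∀ j, x j = ∑ i : Fin n, A i j • x i := by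
      intro j
      have h1 := hx j
      simp only [Matrix.sub_apply, Matrix.one_apply, sub_smul, ite_smul, one_smul, zero_smul,
        Finset.sum_sub_distrib, Finset.sum_ite_eq', Finset.mem_univ, if_true] at h1
      exact (sub_eq_zero.mp h1)
    have hy' : ∀ i, ∑ j : Fin n, A i j * ⟪y j, h⟫_ℂ = 0 := by
      intro i
      have h1 := congrArg (fun v => ⟪v, h⟫_ℂ) (hy i)
      have h2 : ∑ j : Fin n, ⟪y j, h⟫_ℂ * A i j = 0 := by simpa [sum_inner, inner_smul_left] using h1
      rw [← h2]
      exact Finset.sum_congr rfl fun j _ => mul_comm _ _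
    calc ∑ j : Fin n, ⟪y j, h⟫_ℂ • x j
        = ∑ j : Fin n, ∑ i : Fin n, (A i j * ⟪y j, h⟫_ℂ) • x i := by
          refine Finset.sum_congr rfl fun j _ => ?_
          rw [hx' j, Finset.smul_sum]
          exact Finset.sum_congr rfl fun i _ => by rw [smul_smul, mul_comm]
      _ = ∑ i : Fin n, (∑ j : Fin n, A i j * ⟪y j, h⟫_ℂ) • x i := by
          rw [Finset.sum_comm]
          exact Finset.sum_congr rfl fun i _ => (Finset.sum_smul).symm
      _ = 0 := by simp [hy']
end
end

section
/- Let H be a complex Hilbert space and x_1,...,x_n, y_1,...,y_n ∈ H. Then ∑_{i=1}^n x_i ⊗ y_i = 0 if and only if there exist an invertible n×n complex matrix U, an integer 0 ≤ l ≤ n, vectors u_1,...,u_l ∈ H and w_{l+1},...,w_n ∈ H such that (x_1,...,x_n) = (u_1,...,u_l,0,...,0)·U and (y_1,...,y_n) = (0,...,0,w_{l+1},...,w_n)·(U*)^{-1}. -/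
noncomputable section

open scoped ComplexConjugate

lemma rankOne_apply' {H : Type*} [NormedAddCommGroup H] [InnerProductSpace ℂ H]
    (x y h : H) : rankOne x y h = (inner ℂ y h : ℂ) • x := rfl

/-- `∑ xᵢ ⊗ yᵢ = 0` iff there exist an invertible matrix `U`, `0 ≤ l ≤ n`, and
vectors `u_1,...,u_l`, `w_{l+1},...,w_n` with
`(x_1,...,x_n) = (u_1,...,u_l,0,...,0)·U` and `(y_1,...,y_n) = (0,...,0,w_{l+1},...,w_n)·(U*)⁻¹`. -/
theorem stmt2 {H : Type*} [NormedAddCommGroup H] [InnerProductSpace ℂ H]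
    (n : ℕ) (x y : Fin n → H) :
    (∑ i : Fin n, rankOne (x i) (y i)) = 0 ↔
      ∃ (U : Matrix (Fin n) (Fin n) ℂ) (l : ℕ) (u w : Fin n → H),
        IsUnit U ∧ l ≤ n ∧
        (∀ j : Fin n, x j = ∑ i : Fin n, U i j • (if (i : ℕ) < l then u i else 0)) ∧
        (∀ j : Fin n, y j = ∑ i : Fin n, ((U.conjTranspose)⁻¹) i j • (if (i : ℕ) < l then 0 else w i)) := by
  constructor
  · intro h0

    classical
    set T : (Fin n → ℂ) →ₗ[ℂ] H := Fintype.linearCombination ℂ x with hTdef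
    have hT : ∀ c : Fin n → ℂ, T c = ∑ j, c j • x j := fun c => rfl
    obtain ⟨K', hc⟩ := Submodule.exists_isCompl (LinearMap.ker T)
    set K := LinearMap.ker T
    set l := Module.finrank ℂ K' with hl
    set m := Module.finrank ℂ K with hm
    have hlm : l + m = n := by
      have := Submodule.finrank_add_eq_of_isCompl hc
      rw [Module.finrank_fin_fun] at this
      omega
    have bK' : Module.Basis (Fin l) ℂ K' := Module.finBasis ℂ K'
    have bK : Module.Basis (Fin m) ℂ K := Module.finBasis ℂ K
    set b0 : Module.Basis (Fin l ⊕ Fin m) ℂ (Fin n → ℂ) :=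
      (bK'.prod bK).map (Submodule.prodEquivOfIsCompl K' K hc.symm) with hb0
    set e : Fin l ⊕ Fin m ≃ Fin n := finSumFinEquiv.trans (finCongr hlm) with he
    set b : Module.Basis (Fin n) ℂ (Fin n → ℂ) := b0.reindex e with hb
    -- membership
    have hmem : ∀ i : Fin n, (((i : ℕ) < l → (b i) ∈ K') ∧ (¬ ((i : ℕ) < l) → (b i) ∈ K)) := by
      intro i
      have hbi : b i = b0 (e.symm i) := b0.reindex_apply e i
      rcases hs : e.symm i with j | k
      · have hi : (i : ℕ) = (j : ℕ) := by
          have : e (Sum.inl j) = i := by rw [← hs, e.apply_symm_apply]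
          rw [← this]
          simp [he]
        constructor
        · intro _
          rw [hbi, hs, hb0]
          simp only [Module.Basis.map_apply, Module.Basis.prod_apply, Sum.elim_inl, Function.comp_apply,
            LinearMap.coe_inl]
          rw [Submodule.coe_prodEquivOfIsCompl']
          simp
        · intro hcon; exact absurd (hi ▸ j.isLt) hcon
      · have hi : (i : ℕ) = l + (k : ℕ) := by
          have : e (Sum.inr k) = i := by rw [← hs, e.apply_symm_apply]
          rw [← this]
          simp [he]
        constructor
        · intro hcon; omega
        · intro _
          rw [hbi, hs, hb0]
          simp only [Module.Basis.map_apply, Module.Basis.prod_apply, Sum.elim_inr, Function.comp_apply,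
            LinearMap.coe_inr]
          rw [Submodule.coe_prodEquivOfIsCompl']
          simp
    set U : Matrix (Fin n) (Fin n) ℂ := b.toMatrix (Pi.basisFun ℂ (Fin n)) with hU
    have hUunit : IsUnit U := by
      have := Module.Basis.invertibleToMatrix b (Pi.basisFun ℂ (Fin n))
      exact isUnit_of_invertible U
    have hTb0 : ∀ i : Fin n, ¬ ((i : ℕ) < l) → T (b i) = 0 := by
      intro i hi
      exact (LinearMap.mem_ker).mp ((hmem i).2 hi)
    -- x in terms of T (b i)
    have hxT : ∀ j : Fin n, x j = ∑ i, U i j • T (b i) := by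
      intro j
      have h1 : (Pi.basisFun ℂ (Fin n)) j = ∑ i, U i j • b i := by
        conv_lhs => rw [← b.sum_repr ((Pi.basisFun ℂ (Fin n)) j)]
        exact Finset.sum_congr rfl fun i _ => by rw [hU, Module.Basis.toMatrix_apply]
      have h2 : T ((Pi.basisFun ℂ (Fin n)) j) = x j := by
        rw [hT]
        simp [Pi.basisFun_apply, Pi.single_apply]
      rw [← h2, h1, map_sum]
      simp_rw [map_smul]
    set w : Fin n → H := fun i => ∑ j, (starRingEnd ℂ) (U i j) • y j with hw
    have hwzero : ∀ i : Fin n, (i : ℕ) < l → w i = 0 := by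
      intro i0 hi0
      have hinner : ∀ v : H, (inner ℂ (w i0) v : ℂ) = 0 := by
        intro v
        set c : Fin n → ℂ := fun i => if (i : ℕ) < l then (∑ j, U i j * (inner ℂ (y j) v : ℂ)) else 0
          with hcdef
        have hgK' : (∑ i, c i • b i) ∈ K' := by
          refine Submodule.sum_mem _ fun i _ => ?_
          by_cases hi : (i : ℕ) < l
          · exact Submodule.smul_mem _ _ ((hmem i).1 hi)
          · simp [hcdef, hi]
        have hgK : (∑ i, c i • b i) ∈ K := by
          have hTg : T (∑ i, c i • b i) = ∑ j, (inner ℂ (y j) v : ℂ) • x j := by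
            rw [map_sum]
            simp_rw [map_smul]
            have : ∀ i : Fin n, c i • T (b i) = (∑ j, U i j * (inner ℂ (y j) v : ℂ)) • T (b i) := by
              intro i
              by_cases hi : (i : ℕ) < l
              · simp [hcdef, hi]
              · rw [hTb0 i hi]; simp
            rw [Finset.sum_congr rfl fun i _ => this i]
            calc ∑ i, (∑ j, U i j * (inner ℂ (y j) v : ℂ)) • T (b i)
                = ∑ i, ∑ j, (inner ℂ (y j) v : ℂ) • (U i j • T (b i)) := by
                  refine Finset.sum_congr rfl fun i _ => ?_
                  rw [Finset.sum_smul]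
                  refine Finset.sum_congr rfl fun j _ => ?_
                  rw [smul_smul, mul_comm (inner ℂ (y j) v : ℂ) (U i j)]
              _ = ∑ j, (inner ℂ (y j) v : ℂ) • (∑ i, U i j • T (b i)) := by
                  rw [Finset.sum_comm]
                  simp_rw [Finset.smul_sum]
              _ = ∑ j, (inner ℂ (y j) v : ℂ) • x j := by
                  refine Finset.sum_congr rfl fun j _ => ?_
                  rw [← hxT j]
          have hzero : ∑ j, (inner ℂ (y j) v : ℂ) • x j = 0 := by
            have := congrArg (fun (f : H →L[ℂ] H) => f v) h0
            simpa [ContinuousLinearMap.sum_apply, rankOne_apply'] using this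
          exact LinearMap.mem_ker.mpr (by rw [hTg, hzero])
        have hgbot : (∑ i, c i • b i) = 0 :=
          (Submodule.disjoint_def.mp hc.disjoint) _ hgK hgK'
        have hc0 : ∀ i, c i = 0 := Fintype.linearIndependent_iff.mp b.linearIndependent c hgbot
        have hci0 : (∑ j, U i0 j * (inner ℂ (y j) v : ℂ)) = 0 := by
          simpa only [hcdef, hi0, if_true] using hc0 i0
        have hwv : (inner ℂ (w i0) v : ℂ) = ∑ j, U i0 j * (inner ℂ (y j) v : ℂ) := by
          simp only [hw, sum_inner, inner_smul_left, starRingEnd_self_apply]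
        rw [hwv, hci0]
      have := hinner (w i0)
      rwa [inner_self_eq_zero] at this
    refine ⟨U, l, fun i => T (b i), w, hUunit, by omega, ?_, ?_⟩
    · intro j
      rw [hxT j]
      refine Finset.sum_congr rfl fun i _ => ?_
      by_cases hi : (i : ℕ) < l
      · rw [if_pos hi]
      · rw [if_neg hi, hTb0 i hi]
    · intro j
      have hswap : ∀ i : Fin n, (if (i : ℕ) < l then (0:H) else w i) = w i := by
        intro i
        by_cases hi : (i : ℕ) < l
        · rw [if_pos hi, hwzero i hi]
        · rw [if_neg hi]
      simp_rw [hswap]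
      set V := (U.conjTranspose)⁻¹ with hV
      have hKey : ∀ k : Fin n, (∑ i, V i j * (starRingEnd ℂ) (U i k)) = if k = j then 1 else 0 := by
        intro k
        have hdet : IsUnit (U.conjTranspose).det := by
          rw [Matrix.det_conjTranspose]
          exact (Matrix.isUnit_iff_isUnit_det U).mp hUunit |>.star
        have : ∀ i, (starRingEnd ℂ) (U i k) = U.conjTranspose k i := by
          intro i; rw [Matrix.conjTranspose_apply]; rfl
        simp_rw [this]
        have : (∑ i, V i j * U.conjTranspose k i) = (U.conjTranspose * V) k j := by
          rw [Matrix.mul_apply]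
          refine Finset.sum_congr rfl fun i _ => mul_comm _ _
        rw [this, hV, Matrix.mul_nonsing_inv _ hdet, Matrix.one_apply]
      calc y j = ∑ k, (if k = j then (1:ℂ) else 0) • y k := by
            rw [Fintype.sum_eq_single j (fun k hk => by rw [if_neg hk, zero_smul])]
            rw [if_pos rfl, one_smul]
        _ = ∑ k, (∑ i, V i j * (starRingEnd ℂ) (U i k)) • y k := by
            refine Finset.sum_congr rfl fun k _ => ?_
            rw [hKey k]
        _ = ∑ i, V i j • w i := by
            simp_rw [Finset.sum_smul]
            rw [Finset.sum_comm]
            refine Finset.sum_congr rfl fun i _ => ?_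
            simp only [hw]
            rw [Finset.smul_sum]
            exact Finset.sum_congr rfl fun k _ => by rw [smul_smul]
  · rintro ⟨U, l, u, w, hU, hl, hx, hy⟩

    set V := (U.conjTranspose)⁻¹ with hV
    set a : Fin n → H := fun i => if (i : ℕ) < l then u i else 0 with ha
    set b : Fin n → H := fun i => if (i : ℕ) < l then 0 else w i with hb
    have hUdet : IsUnit U.det := (Matrix.isUnit_iff_isUnit_det U).mp hU
    have key : ∀ i k : Fin n, (∑ j, U i j * (starRingEnd ℂ) (V k j)) = if i = k then 1 else 0 := by
      intro i k
      have h2 : V.conjTranspose = U⁻¹ := by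
        rw [hV, ← Matrix.conjTranspose_nonsing_inv, Matrix.conjTranspose_conjTranspose]
      have h3 : ∀ j, (starRingEnd ℂ) (V k j) = U⁻¹ j k := by
        intro j; rw [← h2, Matrix.conjTranspose_apply]; rfl
      simp_rw [h3]
      rw [← Matrix.mul_apply, Matrix.mul_nonsing_inv U hUdet, Matrix.one_apply]
    ext h
    simp only [ContinuousLinearMap.sum_apply, ContinuousLinearMap.zero_apply, rankOne_apply']
    calc ∑ j, (inner ℂ (y j) h : ℂ) • x j
        = ∑ j, ∑ i, ∑ k, ((U i j * (starRingEnd ℂ) (V k j)) * (inner ℂ (b k) h : ℂ)) • a i := by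
          refine Finset.sum_congr rfl fun j _ => ?_
          rw [hx j, hy j, sum_inner, Finset.smul_sum]
          refine Finset.sum_congr rfl fun i _ => ?_
          rw [Finset.sum_smul]
          refine Finset.sum_congr rfl fun k _ => ?_
          rw [inner_smul_left, smul_smul]
          simp only [ha, hb]; congr 1; ring
      _ = ∑ i, ∑ k, ((∑ j, U i j * (starRingEnd ℂ) (V k j)) * (inner ℂ (b k) h : ℂ)) • a i := by
          rw [Finset.sum_comm]
          refine Finset.sum_congr rfl fun i _ => ?_
          rw [Finset.sum_comm]
          refine Finset.sum_congr rfl fun k _ => ?_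
          rw [← Finset.sum_smul, ← Finset.sum_mul]
      _ = ∑ i, (inner ℂ (b i) h : ℂ) • a i := by
          refine Finset.sum_congr rfl fun i _ => ?_
          simp_rw [key]
          rw [Fintype.sum_eq_single i (fun k hk => by simp [Ne.symm hk])]
          simp
      _ = 0 := by
          refine Finset.sum_eq_zero fun i _ => ?_
          by_cases hi : (i : ℕ) < l <;> simp [ha, hb, hi]
end
end

section
/- Let H be a complex vector space and x_1,...,x_n ∈ H with dim span{x_1,...,x_n} = r where 0 < r < n. Then there exist a lower triangular (n−r)×(n−r) complex matrix L with all diagonal entries equal to 1 and all entries of modulus at most 1, a complex r×(n−r) matrix B with all entries of modulus at most 1, and a permutation σ of {1,...,n}, such that span{x_{σ(n−r+1)},...,x_{σ(n)}} = span{x_1,...,x_n} and (x_{σ(1)},...,x_{σ(n)}) · [L; B] = 0, where [L; B] is the n×(n−r) block matrix with L on top of B. -/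
noncomputable section

set_option maxHeartbeats 2000000 in
/-- if `dim span{x_1,...,x_n} = r` with `0 < r < n`, there exist a lower triangular
matrix `L` with unit diagonal and entries of modulus `≤ 1`, a matrix `B` with entries of modulus
`≤ 1`, and a permutation `σ` such that the last `r` of the permuted vectors span everything and
`(x_{σ(1)},...,x_{σ(n)})·[L; B] = 0`. -/
theorem stmt3 {H : Type*} [AddCommGroup H] [Module ℂ H]
    (n r : ℕ) (hr0 : 0 < r) (hrn : r < n) (x : Fin n → H)
    (hdim : Module.finrank ℂ ↥(Submodule.span ℂ (Set.range x)) = r) :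
    ∃ (L : Matrix (Fin (n - r)) (Fin (n - r)) ℂ) (B : Matrix (Fin r) (Fin (n - r)) ℂ)
      (σ : Equiv.Perm (Fin n)),
      (∀ i j : Fin (n - r), i < j → L i j = 0) ∧
      (∀ i : Fin (n - r), L i i = 1) ∧
      (∀ i j, ‖L i j‖ ≤ 1) ∧
      (∀ i j, ‖B i j‖ ≤ 1) ∧
      (Submodule.span ℂ
          (Set.range fun i : Fin r => x (σ ⟨n - r + (i : ℕ), by have := i.isLt; omega⟩)) =
        Submodule.span ℂ (Set.range x)) ∧
      (∀ j : Fin (n - r),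
        (∑ i : Fin (n - r), L i j • x (σ ⟨(i : ℕ), by have := i.isLt; omega⟩)) +
          (∑ i : Fin r, B i j • x (σ ⟨n - r + (i : ℕ), by have := i.isLt; omega⟩)) = 0) := by
  classical
  set W := Submodule.span ℂ (Set.range x) with hW
  have hfd : FiniteDimensional ℂ W := FiniteDimensional.span_of_finite ℂ (Set.finite_range x)
  let b : Module.Basis (Fin r) ℂ W := Module.finBasisOfFinrankEq ℂ W hdim
  let x' : Fin n → W := fun i => ⟨x i, Submodule.subset_span (Set.mem_range_self i)⟩
  have hcomp : (W.subtype ∘ x') = x := funext fun i => rfl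
  have hx'span : Submodule.span ℂ (Set.range x') = ⊤ := by
    apply Submodule.map_injective_of_injective W.injective_subtype
    rw [Submodule.map_span, Submodule.map_top, Submodule.range_subtype, ← Set.range_comp, hcomp]
  haveI : Nonempty (Fin r) := ⟨⟨0, hr0⟩⟩
  obtain ⟨s, hst, hsspan, hsind⟩ := exists_linearIndependent ℂ (Set.range x')
  rw [hx'span] at hsspan
  have hsfin : s.Finite := (Set.finite_range x').subset hst
  haveI : Fintype s := hsfin.fintype
  have hcards : Fintype.card s = r := by
    have := Module.finrank_eq_card_basis (Module.Basis.mk hsind (by rw [Subtype.range_coe]; exact hsspan.ge))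
    rw [hdim] at this
    exact this.symm
  let e : Fin r ≃ s := (Fintype.equivFinOfCardEq hcards).symm
  have ht1 : ∃ t1 : Fin r → Fin n, ∀ i, x' (t1 i) = (e i : W) :=
    ⟨fun i => (hst (e i).2).choose, fun i => (hst (e i).2).choose_spec⟩
  obtain ⟨t1, ht1⟩ := ht1
  have hind1 : LinearIndependent ℂ (x' ∘ t1) := by
    have : (x' ∘ t1) = (fun v : s => (v : W)) ∘ e := funext fun i => ht1 i
    rw [this]
    exact hsind.comp e e.injective
  have hdet1 : b.det (x' ∘ t1) ≠ 0 := by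
    have hspan1 : Submodule.span ℂ (Set.range (x' ∘ t1)) = ⊤ :=
      hind1.span_eq_top_of_card_eq_finrank (by simp [hdim])
    exact ((Module.Basis.is_basis_iff_det b).mp ⟨hind1, hspan1⟩).ne_zero
  obtain ⟨t₀, -, hmax⟩ := Finset.exists_max_image (Finset.univ : Finset (Fin r → Fin n))
    (fun t => ‖b.det (x' ∘ t)‖) ⟨t1, Finset.mem_univ t1⟩
  have hmax' : ∀ t : Fin r → Fin n,
      ‖b.det (x' ∘ t)‖ ≤ ‖b.det (x' ∘ t₀)‖ :=
    fun t => hmax t (Finset.mem_univ t)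
  have hdet0 : b.det (x' ∘ t₀) ≠ 0 := by
    intro h
    have h2 := hmax' t1
    rw [h, norm_zero] at h2
    exact hdet1 (norm_eq_zero.mp (le_antisymm h2 (norm_nonneg _)))
  set y : Fin r → W := x' ∘ t₀ with hy
  have hindy : LinearIndependent ℂ y ∧ Submodule.span ℂ (Set.range y) = ⊤ :=
    (Module.Basis.is_basis_iff_det b).mpr (isUnit_iff_ne_zero.mpr hdet0)
  have ht₀inj : Function.Injective t₀ := fun i j h => hindy.1.injective (by simp [hy, h])
  let by' : Module.Basis (Fin r) ℂ W := Module.Basis.mk hindy.1 hindy.2.ge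
  have hby' : ⇑by' = y := Module.Basis.coe_mk _ _
  -- the key coefficient bound
  have hbound : ∀ (p : Fin n) (k : Fin r), ‖by'.repr (x' p) k‖ ≤ 1 := by
    intro p k
    set c : Fin r → ℂ := fun k => by'.repr (x' p) k with hc
    have hrepr : (∑ m, c m • y m) = x' p := by
      conv_rhs => rw [← by'.sum_repr (x' p)]
      simp [hby', hc]
    have hdetc : b.det (Function.update y k (x' p)) = c k * b.det y := by
      rw [← hrepr]
      have h1 : b.det (Function.update y k (∑ m, c m • y m)) =
          ∑ m, b.det.toMultilinearMap (Function.update y k (c m • y m)) :=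
        b.det.toMultilinearMap.map_update_sum Finset.univ k (fun m => c m • y m) y
      rw [h1, Finset.sum_eq_single k]
      · rw [MultilinearMap.map_update_smul, Function.update_eq_self]
        rfl
      · intro m _ hm
        rw [MultilinearMap.map_update_smul]
        have h0 : b.det (Function.update y k (y m)) = 0 := by
          apply b.det.map_eq_zero_of_eq _ (i := k) (j := m)
          · simp [Function.update_of_ne hm]
          · exact hm.symm
        change c m • b.det (Function.update y k (y m)) = 0
        rw [h0, smul_zero]
      · simp
    have hupd : Function.update y k (x' p) = x' ∘ Function.update t₀ k p := by
      funext m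
      by_cases hmk : m = k
      · subst hmk; simp
      · simp [hy, Function.update_of_ne hmk]
    have hle : ‖c k‖ * ‖b.det y‖ ≤ ‖b.det y‖ := by
      rw [← norm_mul, ← hdetc, hupd]
      exact hmax' _
    have hpos : 0 < ‖b.det y‖ := norm_pos_iff.mpr hdet0
    exact le_of_mul_le_mul_right (by linarith) hpos
  -- build the permutation
  have hnr : n - r + r = n := by omega
  have hσex : ∃ σ : Equiv.Perm (Fin n),
      ∀ (i : Fin r) (h : n - r + (i : ℕ) < n), σ ⟨n - r + (i : ℕ), h⟩ = t₀ i := by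
    set s₀ : Set (Fin n) := Set.range t₀ with hs₀
    haveI : Fintype s₀ := Set.fintypeRange t₀
    have hcard₀ : Fintype.card s₀ = r := by
      rw [Set.card_range_of_injective ht₀inj, Fintype.card_fin]
    have hcardc : Fintype.card (↥s₀ᶜ) = n - r := by
      rw [Fintype.card_compl_set, hcard₀, Fintype.card_fin]
    let eC : Fin (n - r) ≃ ↥s₀ᶜ := (Fintype.equivFinOfCardEq hcardc).symm
    let eT : Fin r ≃ s₀ := Equiv.ofInjective t₀ ht₀inj
    let E : (Fin (n - r) ⊕ Fin r) ≃ Fin n :=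
      (Equiv.sumCongr eC eT).trans ((Equiv.sumComm _ _).trans (Equiv.Set.sumCompl s₀))
    refine ⟨(finCongr hnr.symm).trans (finSumFinEquiv.symm.trans E), ?_⟩
    intro i h
    show E (finSumFinEquiv.symm (finCongr hnr.symm ⟨n - r + (i : ℕ), h⟩)) = t₀ i
    have h2 : finCongr hnr.symm ⟨n - r + (i : ℕ), h⟩ = Fin.natAdd (n - r) i := by
      apply Fin.ext; rfl
    rw [h2, ← finSumFinEquiv_apply_right, Equiv.symm_apply_apply]
    show (Equiv.Set.sumCompl s₀) (Sum.inl (eT i)) = t₀ i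
    rw [Equiv.Set.sumCompl_apply_inl]
    rfl
  obtain ⟨σ, hσr⟩ := hσex
  have hnr' : n - r ≤ n := by omega
  refine ⟨1, Matrix.of fun (k' : Fin r) (j' : Fin (n - r)) =>
      -(by'.repr (x' (σ (Fin.castLE hnr' j'))) k'), σ, ?_, ?_, ?_, ?_, ?_, ?_⟩
  · intro i j hij
    exact Matrix.one_apply_ne (ne_of_lt hij)
  · intro i
    exact Matrix.one_apply_eq i
  · intro i j
    rw [Matrix.one_apply]
    split <;> simp
  · intro k j
    show ‖(-(by'.repr (x' (σ (Fin.castLE hnr' j))) k))‖ ≤ 1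
    rw [norm_neg]
    exact hbound _ k
  · have hy' : (fun i : Fin r => x (σ ⟨n - r + (i : ℕ), by have := i.isLt; omega⟩)) = x ∘ t₀ := by
      funext i
      rw [hσr i (by have := i.isLt; omega)]
      rfl
    rw [hy']
    have hmap : Submodule.map W.subtype (Submodule.span ℂ (Set.range y)) =
        Submodule.span ℂ (Set.range (x ∘ t₀)) := by
      rw [Submodule.map_span, ← Set.range_comp]
      congr 1
    rw [hindy.2, Submodule.map_top, Submodule.range_subtype] at hmap
    exact hmap.symm
  · intro j
    have hj : (j : ℕ) < n := by have := j.isLt; omega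
    have hsum1 : (∑ i : Fin (n - r),
        (1 : Matrix (Fin (n - r)) (Fin (n - r)) ℂ) i j • x (σ ⟨(i : ℕ), by have := i.isLt; omega⟩))
        = x (σ ⟨(j : ℕ), hj⟩) := by
      rw [Finset.sum_eq_single j]
      · rw [Matrix.one_apply_eq, one_smul]
      · intro m _ hm
        rw [Matrix.one_apply_ne hm, zero_smul]
      · simp
    rw [hsum1]
    have hp := congrArg W.subtype (by'.sum_repr (x' (σ ⟨(j : ℕ), hj⟩)))
    rw [map_sum] at hp
    have hp2 : (∑ k : Fin r, (by'.repr (x' (σ ⟨(j : ℕ), hj⟩)) k) • x (t₀ k))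
        = x (σ ⟨(j : ℕ), hj⟩) := by
      have hid : W.subtype (x' (σ ⟨(j : ℕ), hj⟩)) = x (σ ⟨(j : ℕ), hj⟩) := rfl
      rw [← hid, ← hp]
      apply Finset.sum_congr rfl
      intro k _
      rw [map_smul, hby']
      rfl
    have hterm : ∀ k : Fin r,
        (Matrix.of fun (k' : Fin r) (j' : Fin (n - r)) =>
            -(by'.repr (x' (σ (Fin.castLE hnr' j'))) k') : Matrix _ _ ℂ) k j •
          x (σ ⟨n - r + (k : ℕ), by have := k.isLt; omega⟩)
        = -((by'.repr (x' (σ ⟨(j : ℕ), hj⟩)) k) • x (t₀ k)) := by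
      intro k
      rw [hσr k (by have := k.isLt; omega)]
      show (-(by'.repr (x' (σ ⟨(j : ℕ), hj⟩)) k)) • x (t₀ k) = _
      rw [neg_smul]
    rw [Finset.sum_congr rfl (fun k _ => hterm k), Finset.sum_neg_distrib, hp2]
    exact add_neg_cancel _
end
end

section
/- For z in the open unit disk 𝔻, let φ_z(w) = (w−z)/(1−z̄w) and let k_z(w) = √(1−|z|²)/(1−z̄w) be the normalized reproducing kernel of H². Then the Hankel operator H_{φ̄_z} on H² (with symbol the complex conjugate of φ_z) equals the rank-one operator k_{z̄} ⊗ k_z, i.e., H_{φ̄_z} h = ⟨h, k_z⟩ k_{z̄} for all h ∈ H². -/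
noncomputable section

/- We model `L²(𝕋)` as an abstract complex Hilbert space `H` with Hilbert basis `b : ℤ → H`
(the exponentials `z^k`). `H²` is the closed span of `b k`, `k ≥ 0`, with Riesz projection `P`.
The bilateral shift `W` satisfies `W (b k) = b (k+1)` and the flip `J` satisfies
`J (b k) = b (−k−1)`.  Since `φ_z ∈ H^∞`, multiplication by `φ_z = (w−z)/(1−z̄w)` on `L²` is the
operator `(W − z)(1 − z̄W)⁻¹`, and multiplication by `φ̄_z` is its adjoint.  The Hankel operator
with symbol `φ̄_z` is `h ↦ P(J(M_{φ̄_z} h))` on `H²`.  The normalized Szegő kernel is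
`k_z = √(1−|z|²) ∑_{m≥0} z̄^m b m`. -/

noncomputable def hardy {H : Type*} [NormedAddCommGroup H] [InnerProductSpace ℂ H]
    [CompleteSpace H] (b : HilbertBasis ℤ ℂ H) : Submodule ℂ H :=
  (Submodule.span ℂ (Set.range fun m : ℕ => b (m : ℤ))).topologicalClosure

noncomputable def hardyProj {H : Type*} [NormedAddCommGroup H] [InnerProductSpace ℂ H]
    [CompleteSpace H] (b : HilbertBasis ℤ ℂ H) : H →L[ℂ] H :=
  haveI : CompleteSpace (hardy b) :=
    (Submodule.isClosed_topologicalClosure _).completeSpace_coe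
  (hardy b).subtypeL.comp (Submodule.orthogonalProjectionOnto (hardy b))

/-- The normalized Szegő kernel `k_z` in the basis `b`. -/
noncomputable def szego {H : Type*} [NormedAddCommGroup H] [InnerProductSpace ℂ H]
    [CompleteSpace H] (b : HilbertBasis ℤ ℂ H) (z : ℂ) : H :=
  (Real.sqrt (1 - ‖z‖ ^ 2) : ℝ) •
    ∑' m : ℕ, (starRingEnd ℂ z) ^ m • b (m : ℤ)

/-- Multiplication by the Möbius function `φ_z(w) = (w−z)/(1−z̄w)` on `L²`. -/
noncomputable def mobiusMul {H : Type*} [NormedAddCommGroup H] [InnerProductSpace ℂ H]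
    [CompleteSpace H] (W : H →L[ℂ] H) (z : ℂ) : H →L[ℂ] H :=
  (W - z • (1 : H →L[ℂ] H)) * Ring.inverse (1 - (starRingEnd ℂ z) • W)

namespace Stmt11Aux

open ContinuousLinearMap

variable {H : Type*} [NormedAddCommGroup H] [InnerProductSpace ℂ H] [CompleteSpace H]

local notation "⟪" x ", " y "⟫" => @inner ℂ _ _ x y

lemma binner (b : HilbertBasis ℤ ℂ H) (i j : ℤ) :
    ⟪b i, b j⟫ = if i = j then 1 else 0 := by
  classical
  have := b.orthonormal
  rw [orthonormal_iff_ite] at this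
  exact this i j

lemma bnorm (b : HilbertBasis ℤ ℂ H) (k : ℤ) : ‖(b k : H)‖ = 1 :=
  b.orthonormal.1 k

lemma bext (b : HilbertBasis ℤ ℂ H) {x y : H}
    (h : ∀ i, ⟪b i, x⟫ = ⟪b i, y⟫) : x = y := by
  apply b.repr.injective
  apply lp.ext
  funext i
  have hx : (b.repr x : ℤ → ℂ) i = ⟪b i, x⟫ := b.repr_apply_apply x i
  have hy : (b.repr y : ℤ → ℂ) i = ⟪b i, y⟫ := b.repr_apply_apply y i
  rw [hx, hy, h i]

variable {W : H →L[ℂ] H} {z : ℂ}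

lemma adjW (b : HilbertBasis ℤ ℂ H) (hW : ∀ k : ℤ, W (b k) = b (k + 1)) (k : ℤ) :
    ContinuousLinearMap.adjoint W (b k) = b (k - 1) := by
  apply bext b
  intro i
  rw [ContinuousLinearMap.adjoint_inner_right, hW, binner, binner]
  by_cases h : i = k - 1
  · rw [if_pos (by omega), if_pos h]
  · rw [if_neg (by omega), if_neg h]

lemma normW_apply (b : HilbertBasis ℤ ℂ H) (hW : ∀ k : ℤ, W (b k) = b (k + 1)) (x : H) :
    ‖W x‖ = ‖x‖ := by
  have h1 : ∀ i : ℤ, ⟪b i, W x⟫ = ⟪b (i - 1), x⟫ := fun i => by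
    rw [← ContinuousLinearMap.adjoint_inner_left, adjW b hW]
  have h2 : ⟪W x, W x⟫ = ⟪x, x⟫ := by
    rw [← b.tsum_inner_mul_inner (W x) (W x), ← b.tsum_inner_mul_inner x x,
      ← (Equiv.subRight (1 : ℤ)).tsum_eq (fun i => ⟪x, b i⟫ * ⟪b i, x⟫)]
    refine tsum_congr fun i => ?_
    have h3 : ⟪W x, b i⟫ = ⟪x, b (i - 1)⟫ := by
      rw [← inner_conj_symm (W x) (b i), h1 i, inner_conj_symm]
    rw [h1 i, h3, Equiv.subRight_apply]
  have h3 : ‖W x‖ ^ 2 = ‖x‖ ^ 2 := by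
    have h4 := h2
    rw [inner_self_eq_norm_sq_to_K, inner_self_eq_norm_sq_to_K] at h4
    exact_mod_cast h4
  nlinarith [norm_nonneg (W x), norm_nonneg x]

lemma normW_le (b : HilbertBasis ℤ ℂ H) (hW : ∀ k : ℤ, W (b k) = b (k + 1)) :
    ‖W‖ ≤ 1 :=
  ContinuousLinearMap.opNorm_le_bound _ zero_le_one fun x => by
    rw [normW_apply b hW, one_mul]

lemma isUnitR (b : HilbertBasis ℤ ℂ H) (hW : ∀ k : ℤ, W (b k) = b (k + 1))
    (hz : ‖z‖ < 1) :
    IsUnit ((1 : H →L[ℂ] H) - z • ContinuousLinearMap.adjoint W) := by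
  apply isUnit_one_sub_of_norm_lt_one
  have h1 : ‖ContinuousLinearMap.adjoint W‖ = ‖W‖ :=
    (ContinuousLinearMap.adjoint : (H →L[ℂ] H) ≃ₗᵢ⋆[ℂ] (H →L[ℂ] H)).norm_map W
  calc ‖z • ContinuousLinearMap.adjoint W‖ = ‖z‖ * ‖ContinuousLinearMap.adjoint W‖ :=
        norm_smul _ _
    _ ≤ ‖z‖ * 1 := by
        have := normW_le b hW
        rw [h1]
        gcongr
    _ < 1 := by rw [mul_one]; exact hz

lemma summable_aux (b : HilbertBasis ℤ ℂ H) (hz : ‖z‖ < 1) (g : ℕ → ℤ) :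
    Summable (fun n : ℕ => z ^ n • (b (g n) : H)) := by
  apply Summable.of_norm
  simp only [norm_smul, norm_pow, bnorm, mul_one]
  exact summable_geometric_of_lt_one (norm_nonneg z)
    (by exact hz)

lemma Rstar_apply (b : HilbertBasis ℤ ℂ H) (hW : ∀ k : ℤ, W (b k) = b (k + 1))
    (hz : ‖z‖ < 1) (k : ℤ) :
    Ring.inverse ((1 : H →L[ℂ] H) - z • ContinuousLinearMap.adjoint W) (b k)
      = ∑' n : ℕ, z ^ n • (b (k - n) : H) := by
  set A : H →L[ℂ] H := (1 : H →L[ℂ] H) - z • ContinuousLinearMap.adjoint W with hA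
  set x : H := ∑' n : ℕ, z ^ n • (b (k - n) : H) with hxdef
  have hsum : Summable fun n : ℕ => z ^ n • (b (k - n) : H) := summable_aux b hz _
  have hsum' : Summable fun n : ℕ => z ^ n • (b (k - n - 1) : H) := summable_aux b hz _
  have hWx : ContinuousLinearMap.adjoint W x = ∑' n : ℕ, z ^ n • (b (k - n - 1) : H) := by
    rw [hxdef, ContinuousLinearMap.map_tsum _ hsum]
    exact tsum_congr fun n => by rw [map_smul, adjW b hW]
  have hx : A x = b k := by
    have hz1 : z • ContinuousLinearMap.adjoint W x
        = ∑' n : ℕ, z ^ (n + 1) • (b (k - n - 1) : H) := by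
      rw [hWx, ← Summable.tsum_const_smul z hsum']
      exact tsum_congr fun n => by rw [smul_smul, ← pow_succ']
    have hx2 : x = b k + ∑' n : ℕ, z ^ (n + 1) • (b (k - n - 1) : H) := by
      rw [hxdef, Summable.tsum_eq_zero_add hsum]
      congr 1
      · simp
      · exact tsum_congr fun n => by
          congr 2
          push_cast
          ring
    have : A x = x - z • ContinuousLinearMap.adjoint W x := by
      rw [hA]
      simp [ContinuousLinearMap.sub_apply, ContinuousLinearMap.smul_apply]
    rw [this, hz1, hx2]
    abel
  calc Ring.inverse A (b k) = Ring.inverse A (A x) := by rw [hx]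
    _ = (Ring.inverse A * A) x := rfl
    _ = x := by rw [Ring.inverse_mul_cancel _ (isUnitR b hW hz)]; rfl

lemma adjM (b : HilbertBasis ℤ ℂ H) :
    ContinuousLinearMap.adjoint (mobiusMul W z)
      = Ring.inverse ((1 : H →L[ℂ] H) - z • ContinuousLinearMap.adjoint W) *
        (ContinuousLinearMap.adjoint W - (starRingEnd ℂ z) • 1) := by
  rw [← ContinuousLinearMap.star_eq_adjoint, mobiusMul, star_mul]
  congr 1
  · rw [← Ring.inverse_star]
    congr 1
    simp [star_sub, star_smul, ContinuousLinearMap.star_eq_adjoint]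
  · simp [star_sub, star_smul, ContinuousLinearMap.star_eq_adjoint]

lemma projInt (b : HilbertBasis ℤ ℂ H) (k : ℤ) :
    hardyProj b (b k) = if 0 ≤ k then b k else 0 := by
  haveI : CompleteSpace (hardy b) :=
    (Submodule.isClosed_topologicalClosure _).completeSpace_coe
  by_cases h : 0 ≤ k
  · rw [if_pos h]
    lift k to ℕ using h
    have hmem : (b (k : ℤ) : H) ∈ hardy b :=
      Submodule.le_topologicalClosure _ (Submodule.subset_span ⟨k, rfl⟩)
    simp only [hardyProj, ContinuousLinearMap.comp_apply, Submodule.subtypeL_apply]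
    exact (hardy b).starProjection_eq_self_iff.mpr hmem
  · rw [if_neg h]
    have hspan : ∀ u ∈ Submodule.span ℂ (Set.range fun m : ℕ => (b (m : ℤ) : H)),
        ⟪u, b k⟫ = 0 := by
      intro u hu
      induction hu using Submodule.span_induction with
      | mem x hx =>
          obtain ⟨m, rfl⟩ := hx
          rw [binner, if_neg (by omega)]
      | zero => simp
      | add x y _ _ hx hy => rw [inner_add_left, hx, hy, add_zero]
      | smul c x _ hx => rw [inner_smul_left, hx, mul_zero]
    have hperp : (b k : H) ∈ (hardy b)ᗮ := by
      rw [Submodule.mem_orthogonal]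
      intro u hu
      have hu' : u ∈ closure ((Submodule.span ℂ
          (Set.range fun m : ℕ => (b (m : ℤ) : H))) : Set H) := by
        rw [← Submodule.topologicalClosure_coe]
        exact hu
      have hcl : IsClosed {u : H | ⟪u, (b k : H)⟫ = (0 : ℂ)} :=
        isClosed_eq (Continuous.inner continuous_id continuous_const) continuous_const
      exact hcl.closure_subset_iff.mpr (fun v hv => hspan v hv) hu'
    simp only [hardyProj, ContinuousLinearMap.comp_apply, Submodule.subtypeL_apply]
    rw [Submodule.orthogonalProjectionOnto_apply_of_mem_orthogonal hperp]
    rfl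

lemma shifted_tsum (b : HilbertBasis ℤ ℂ H) (hz : ‖z‖ < 1) (m : ℕ) :
    (∑' n : ℕ, z ^ n • (if 0 ≤ (n : ℤ) - m then (b ((n : ℤ) - m) : H) else 0))
      = z ^ m • ∑' j : ℕ, z ^ j • (b (j : ℤ) : H) := by
  classical
  set f : ℕ → H := fun n => z ^ n • (if 0 ≤ (n : ℤ) - m then (b ((n : ℤ) - m) : H) else 0)
    with hf
  have hinj : Function.Injective (fun j : ℕ => m + j) := add_right_injective m
  have hsupp : Function.support f ⊆ Set.range (fun j : ℕ => m + j) := by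
    intro n hn
    by_cases h : m ≤ n
    · exact ⟨n - m, show m + (n - m) = n by omega⟩
    · exfalso
      apply hn
      show z ^ n • (if 0 ≤ (n : ℤ) - m then (b ((n : ℤ) - m) : H) else 0) = 0
      rw [if_neg (by omega), smul_zero]
  have h1 : ∑' j : ℕ, f (m + j) = ∑' n, f n := hinj.tsum_eq hsupp
  have h2 : ∀ j : ℕ, f (m + j) = z ^ m • (z ^ j • (b (j : ℤ) : H)) := by
    intro j
    show z ^ (m + j) • (if 0 ≤ ((m + j : ℕ) : ℤ) - m then (b (((m + j : ℕ) : ℤ) - m) : H) else 0)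
      = z ^ m • (z ^ j • (b (j : ℤ) : H))
    rw [if_pos (by push_cast; omega), smul_smul, ← pow_add]
    congr 2
    push_cast
    ring
  rw [← h1]
  rw [tsum_congr h2, Summable.tsum_const_smul _ (summable_aux b hz _)]

lemma inner_szego (b : HilbertBasis ℤ ℂ H) (hz : ‖z‖ < 1) (m : ℕ) :
    ⟪szego b z, b (m : ℤ)⟫
      = (Real.sqrt (1 - ‖z‖ ^ 2) : ℂ) * z ^ m := by
  have habs : ‖starRingEnd ℂ z‖ < 1 := by rwa [Complex.norm_conj]
  have hsum : Summable fun j : ℕ => (starRingEnd ℂ z) ^ j • (b (j : ℤ) : H) :=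
    summable_aux b habs _
  have hT : ⟪(b (m : ℤ) : H), ∑' j : ℕ, (starRingEnd ℂ z) ^ j • (b (j : ℤ) : H)⟫
      = (starRingEnd ℂ z) ^ m := by
    rw [← innerSL_apply_apply (𝕜 := ℂ), ContinuousLinearMap.map_tsum _ hsum]
    have hterm : ∀ j : ℕ, (innerSL ℂ (b (m : ℤ) : H)) ((starRingEnd ℂ z) ^ j • (b (j : ℤ) : H))
        = if (m : ℤ) = (j : ℤ) then (starRingEnd ℂ z) ^ j else 0 := by
      intro j
      rw [innerSL_apply_apply, inner_smul_right, binner]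
      split <;> simp
    rw [tsum_congr hterm, tsum_eq_single m]
    · rw [if_pos rfl]
    · intro j hj
      rw [if_neg (fun hc => hj (by exact_mod_cast hc.symm))]
  rw [szego, ← Complex.coe_smul, inner_smul_left, Complex.conj_ofReal,
    ← inner_conj_symm, hT,
    show (starRingEnd ℂ) ((starRingEnd ℂ) z ^ m) = z ^ m from by
      rw [← map_pow, Complex.conj_conj]]

lemma szego_conj (b : HilbertBasis ℤ ℂ H) :
    szego b (starRingEnd ℂ z)
      = (Real.sqrt (1 - ‖z‖ ^ 2) : ℝ) • ∑' j : ℕ, z ^ j • (b (j : ℤ) : H) := by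
  rw [szego, Complex.norm_conj]
  congr 1
  exact tsum_congr fun j => by rw [Complex.conj_conj]

lemma main_basis (b : HilbertBasis ℤ ℂ H) (J : H →L[ℂ] H)
    (hW : ∀ k : ℤ, W (b k) = b (k + 1)) (hJ : ∀ k : ℤ, J (b k) = b (-k - 1))
    (hz : ‖z‖ < 1) (m : ℕ) :
    hardyProj b (J (ContinuousLinearMap.adjoint (mobiusMul W z) (b (m : ℤ))))
      = (⟪szego b z, (b (m : ℤ) : H)⟫) • szego b (starRingEnd ℂ z) := by
  set K : H := ∑' j : ℕ, z ^ j • (b (j : ℤ) : H) with hK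
  -- step 1: adjoint of mobiusMul applied to b m
  have step1 : ContinuousLinearMap.adjoint (mobiusMul W z) (b (m : ℤ))
      = (∑' n : ℕ, z ^ n • (b ((m : ℤ) - 1 - n) : H))
        - (starRingEnd ℂ z) • ∑' n : ℕ, z ^ n • (b ((m : ℤ) - n) : H) := by
    rw [adjM b, ContinuousLinearMap.mul_apply]
    rw [show (ContinuousLinearMap.adjoint W - (starRingEnd ℂ z) • 1) (b (m : ℤ))
        = b ((m : ℤ) - 1) - (starRingEnd ℂ z) • b (m : ℤ) from by
      simp [ContinuousLinearMap.sub_apply, ContinuousLinearMap.smul_apply, adjW b hW]]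
    rw [map_sub, map_smul, Rstar_apply b hW hz, Rstar_apply b hW hz]
  -- step 2: apply J
  have step2 : J (ContinuousLinearMap.adjoint (mobiusMul W z) (b (m : ℤ)))
      = (∑' n : ℕ, z ^ n • (b ((n : ℤ) - m) : H))
        - (starRingEnd ℂ z) • ∑' n : ℕ, z ^ n • (b ((n : ℤ) - m - 1) : H) := by
    rw [step1, map_sub, map_smul, ContinuousLinearMap.map_tsum _ (summable_aux b hz _),
      ContinuousLinearMap.map_tsum _ (summable_aux b hz _)]
    congr 1
    · exact tsum_congr fun n => by
        rw [map_smul, hJ]; congr 2; ring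
    · congr 1
      exact tsum_congr fun n => by
        rw [map_smul, hJ]; congr 2; ring
  -- step 3: apply projection
  have hproj1 : hardyProj b (∑' n : ℕ, z ^ n • (b ((n : ℤ) - m) : H))
      = z ^ m • K := by
    rw [ContinuousLinearMap.map_tsum _ (summable_aux b hz _), ← shifted_tsum b hz m]
    exact tsum_congr fun n => by rw [map_smul, projInt]
  have hproj2 : hardyProj b (∑' n : ℕ, z ^ n • (b ((n : ℤ) - m - 1) : H))
      = z ^ (m + 1) • K := by
    rw [ContinuousLinearMap.map_tsum _ (summable_aux b hz _), ← shifted_tsum b hz (m + 1)]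
    refine tsum_congr fun n => ?_
    rw [map_smul, projInt]
    by_cases h : 0 ≤ (n : ℤ) - m - 1
    · rw [if_pos h, if_pos (by push_cast; omega)]
      congr 2
      push_cast
      ring
    · rw [if_neg h, if_neg (by push_cast; omega)]
  have lhs : hardyProj b (J (ContinuousLinearMap.adjoint (mobiusMul W z) (b (m : ℤ))))
      = (z ^ m * (1 - starRingEnd ℂ z * z)) • K := by
    rw [step2, map_sub, map_smul, hproj1, hproj2]
    rw [smul_smul, ← sub_smul]
    congr 1
    ring
  -- RHS
  have hs : (0 : ℝ) ≤ 1 - ‖z‖ ^ 2 := by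
    have : ‖z‖ ^ 2 < 1 := by
      have h0 : (0 : ℝ) ≤ ‖z‖ := norm_nonneg z
      nlinarith
    linarith
  have rhs : (⟪szego b z, (b (m : ℤ) : H)⟫) • szego b (starRingEnd ℂ z)
      = (z ^ m * (1 - starRingEnd ℂ z * z)) • K := by
    rw [inner_szego b hz m, szego_conj b, ← hK, ← Complex.coe_smul, smul_smul]
    congr 1
    have h1 : starRingEnd ℂ z * z = ((‖z‖ ^ 2 : ℝ) : ℂ) := by
      rw [mul_comm, Complex.mul_conj, Complex.normSq_eq_norm_sq]
    rw [h1]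
    have h2 : ((Real.sqrt (1 - ‖z‖ ^ 2) : ℝ) : ℂ) *
        ((Real.sqrt (1 - ‖z‖ ^ 2) : ℝ) : ℂ)
        = (((1 : ℝ) - ‖z‖ ^ 2 : ℝ) : ℂ) := by
      rw [← Complex.ofReal_mul, Real.mul_self_sqrt hs]
    calc ((Real.sqrt (1 - ‖z‖ ^ 2) : ℝ) : ℂ) * z ^ m *
          ((Real.sqrt (1 - ‖z‖ ^ 2) : ℝ) : ℂ)
        = (((Real.sqrt (1 - ‖z‖ ^ 2) : ℝ) : ℂ) *
            ((Real.sqrt (1 - ‖z‖ ^ 2) : ℝ) : ℂ)) * z ^ m := by ring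
      _ = z ^ m * (1 - ((‖z‖ ^ 2 : ℝ) : ℂ)) := by
          rw [h2]; push_cast; ring
  rw [lhs, rhs]

end Stmt11Aux

/-- for `z ∈ 𝔻`, the Hankel operator `H_{φ̄_z}` on `H²` equals the rank-one
operator `k_{z̄} ⊗ k_z`, i.e. `H_{φ̄_z} h = ⟨h, k_z⟩ k_{z̄}` for all `h ∈ H²`. -/
theorem stmt11 {H : Type*} [NormedAddCommGroup H] [InnerProductSpace ℂ H] [CompleteSpace H]
    (b : HilbertBasis ℤ ℂ H) (W J : H →L[ℂ] H)
    (hW : ∀ k : ℤ, W (b k) = b (k + 1))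
    (hJ : ∀ k : ℤ, J (b k) = b (-k - 1))
    (z : ℂ) (hz : ‖z‖ < 1) :
    ∀ h ∈ hardy b,
      hardyProj b (J (ContinuousLinearMap.adjoint (mobiusMul W z) h)) =
        (inner ℂ (szego b z) h : ℂ) • szego b (starRingEnd ℂ z) := by
  intro h hh
  classical
  set L1 : H →L[ℂ] H :=
    (hardyProj b).comp (J.comp (ContinuousLinearMap.adjoint (mobiusMul W z))) with hL1
  set L2 : H →L[ℂ] H :=
    (innerSL ℂ (szego b z)).smulRight (szego b (starRingEnd ℂ z)) with hL2
  have hb : ∀ x ∈ (Set.range fun m : ℕ => (b (m : ℤ) : H)), L1 x = L2 x := by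
    rintro x ⟨m, rfl⟩
    rw [hL1, hL2]
    simp only [ContinuousLinearMap.comp_apply, ContinuousLinearMap.smulRight_apply,
      innerSL_apply_apply]
    exact Stmt11Aux.main_basis b J hW hJ hz m
  have hset : (hardy b : Set H) ⊆ {x | L1 x = L2 x} := by
    rw [hardy, Submodule.topologicalClosure_coe]
    refine closure_minimal ?_ (isClosed_eq L1.continuous L2.continuous)
    intro x hx
    exact LinearMap.eqOn_span hb hx
  have hfin := hset hh
  simp only [Set.mem_setOf_eq, hL1, hL2, ContinuousLinearMap.comp_apply,
    ContinuousLinearMap.smulRight_apply, innerSL_apply_apply] at hfin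
  exact hfin
end
end
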